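/- Let A, M be symmetric positive definite N\times N real matrices and t > 0. Then A + tM is symmetric positive definite, and the map t \mapsto (A + tM)^{-1} f is continuous and satisfies \|(A+tM)^{-1}f\|_M \leq \|f\|_{M^{-1}} / (t + \lambda_{min}(M^{-1}A)) in the M-norm, where \lambda_{min}(M^{-1}A) is the smallest generalized eigenvalue of A x = \lambda M x. -/

import Mathlib

open Matrix

private lemma dot_symm_aux {N : ℕ} (C : Matrix (Fin N) (Fin N) ℝ) (hC : Cᵀ = C)
    (a b : Fin N → ℝ) : a ⬝ᵥ (C *ᵥ b) = (C *ᵥ a) ⬝ᵥ b := by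
  rw [dotProduct_mulVec, ← mulVec_transpose, hC]

private lemma cs_aux {N : ℕ} (u w : Fin N → ℝ) :
    u ⬝ᵥ w ≤ Real.sqrt (u ⬝ᵥ u) * Real.sqrt (w ⬝ᵥ w) := by
  have h := Real.sum_mul_le_sqrt_mul_sqrt Finset.univ u w
  simpa [dotProduct, pow_two] using h

open scoped MatrixOrder in
private lemma sqrt_aux {N : ℕ} (M : Matrix (Fin N) (Fin N) ℝ) (hM : M.PosDef) :
    ∃ C : Matrix (Fin N) (Fin N) ℝ, C * C = M ∧ Cᵀ = C := by
  have h0 : 0 ≤ M := nonneg_iff_posSemidef.mpr hM.posSemidef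
  refine ⟨CFC.sqrt M, CFC.sqrt_mul_sqrt_self M h0, ?_⟩
  have := (nonneg_iff_posSemidef.mp (CFC.sqrt_nonneg M)).isHermitian
  simpa [IsHermitian] using this

theorem stmt17 {N : ℕ} (A M : Matrix (Fin N) (Fin N) ℝ) (hA : A.PosDef) (hM : M.PosDef)
    (f : Fin N → ℝ) (t : ℝ) (ht : 0 < t) :
    (A + t • M).PosDef ∧
      ContinuousOn (fun τ : ℝ => (A + τ • M)⁻¹ *ᵥ f) (Set.Ioi 0) ∧
      Real.sqrt (((A + t • M)⁻¹ *ᵥ f) ⬝ᵥ (M *ᵥ ((A + t • M)⁻¹ *ᵥ f))) ≤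
        Real.sqrt (f ⬝ᵥ (M⁻¹ *ᵥ f)) /
          (t + ⨅ v : {v : Fin N → ℝ // v ≠ 0},
            (v.1 ⬝ᵥ (A *ᵥ v.1)) / (v.1 ⬝ᵥ (M *ᵥ v.1))) := by
  have hSpd : ∀ τ : ℝ, 0 < τ → (A + τ • M).PosDef := by
    intro τ hτ
    refine hA.add (PosDef.of_dotProduct_mulVec_pos ?_ ?_)
    · have := hM.isHermitian
      simp only [IsHermitian, conjTranspose_smul] at this ⊢
      rw [this]
      simp
    · intro x hx
      have h2 := hM.dotProduct_mulVec_pos hx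
      simp only [star_trivial] at h2 ⊢
      rw [smul_mulVec, dotProduct_smul, smul_eq_mul]
      positivity
  set lam := ⨅ v : {v : Fin N → ℝ // v ≠ 0},
      (v.1 ⬝ᵥ (A *ᵥ v.1)) / (v.1 ⬝ᵥ (M *ᵥ v.1)) with hlam
  have hlam0 : 0 ≤ lam := by
    apply Real.iInf_nonneg
    rintro ⟨v, hv⟩
    have h1 := hA.posSemidef.dotProduct_mulVec_nonneg v
    have h2 := hM.posSemidef.dotProduct_mulVec_nonneg v
    simp only [star_trivial] at h1 h2
    exact div_nonneg h1 h2
  have htl : 0 < t + lam := by linarith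
  have hS : (A + t • M).PosDef := hSpd t ht
  refine ⟨hS, ?_, ?_⟩
  · intro τ hτ
    apply ContinuousAt.continuousWithinAt
    have hGc : Continuous fun σ : ℝ => A + σ • M := by continuity
    have h1 : ContinuousAt Inv.inv (A + τ • M) := by
      apply continuousAt_matrix_inv
      rw [Ring.inverse_eq_inv']
      exact continuousAt_inv₀ (hSpd τ hτ).det_pos.ne'
    have h2 : Continuous fun B : Matrix (Fin N) (Fin N) ℝ => B *ᵥ f :=
      continuous_id.matrix_mulVec continuous_const
    have h3 : ContinuousAt (fun σ : ℝ => (A + σ • M)⁻¹) τ :=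
      ContinuousAt.comp h1 hGc.continuousAt
    exact h2.continuousAt.comp h3
  · set x := (A + t • M)⁻¹ *ᵥ f with hxdef
    have hdet : IsUnit (A + t • M).det := isUnit_iff_ne_zero.mpr hS.det_pos.ne'
    have hfx : (A + t • M) *ᵥ x = f := by
      rw [hxdef, mulVec_mulVec, mul_nonsing_inv _ hdet, one_mulVec]
    by_cases hx : x = 0
    · rw [hx]
      simp only [mulVec_zero, dotProduct_zero, zero_dotProduct, Real.sqrt_zero]
      exact div_nonneg (Real.sqrt_nonneg _) htl.le
    · -- main inequality
      have hMx : 0 < x ⬝ᵥ (M *ᵥ x) := by simpa using hM.dotProduct_mulVec_pos hx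
      have hbdd : BddBelow (Set.range fun v : {v : Fin N → ℝ // v ≠ 0} =>
          (v.1 ⬝ᵥ (A *ᵥ v.1)) / (v.1 ⬝ᵥ (M *ᵥ v.1))) := by
        refine ⟨0, ?_⟩
        rintro r ⟨⟨v, hv⟩, rfl⟩
        have h1 := hA.posSemidef.dotProduct_mulVec_nonneg v
        have h2 := hM.posSemidef.dotProduct_mulVec_nonneg v
        simp only [star_trivial] at h1 h2
        exact div_nonneg h1 h2
      have hle : lam ≤ (x ⬝ᵥ (A *ᵥ x)) / (x ⬝ᵥ (M *ᵥ x)) :=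
        ciInf_le hbdd ⟨x, hx⟩
      have hAx : lam * (x ⬝ᵥ (M *ᵥ x)) ≤ x ⬝ᵥ (A *ᵥ x) := by
        rw [← le_div_iff₀ hMx]; exact hle
      have hdot : x ⬝ᵥ f = x ⬝ᵥ (A *ᵥ x) + t * (x ⬝ᵥ (M *ᵥ x)) := by
        rw [← hfx, add_mulVec, dotProduct_add, smul_mulVec, dotProduct_smul,
          smul_eq_mul]
      -- square root of M
      obtain ⟨C, hC2, hCt⟩ := sqrt_aux M hM
      have hCdet : IsUnit C.det := by
        apply isUnit_iff_ne_zero.mpr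
        intro h
        have : M.det = 0 := by rw [← hC2, det_mul, h, zero_mul]
        exact hM.det_pos.ne' this
      have hCinvT : (C⁻¹)ᵀ = C⁻¹ := by rw [transpose_nonsing_inv, hCt]
      set u := C *ᵥ x with hu
      set w := C⁻¹ *ᵥ f with hw
      have claim1 : x ⬝ᵥ (M *ᵥ x) = u ⬝ᵥ u := by
        rw [← hC2, ← mulVec_mulVec, dot_symm_aux C hCt]
      have claim2 : f ⬝ᵥ (M⁻¹ *ᵥ f) = w ⬝ᵥ w := by
        rw [← hC2, Matrix.mul_inv_rev, ← mulVec_mulVec, dot_symm_aux _ hCinvT]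
      have claim3 : x ⬝ᵥ f = u ⬝ᵥ w := by
        have h1 : f = C *ᵥ (C⁻¹ *ᵥ f) := by
          rw [mulVec_mulVec, mul_nonsing_inv _ hCdet, one_mulVec]
        conv_lhs => rw [h1]
        rw [dot_symm_aux C hCt]
      have hcs : x ⬝ᵥ f ≤ Real.sqrt (x ⬝ᵥ (M *ᵥ x)) * Real.sqrt (f ⬝ᵥ (M⁻¹ *ᵥ f)) := by
        rw [claim1, claim2, claim3]
        exact cs_aux u w
      set a := Real.sqrt (x ⬝ᵥ (M *ᵥ x)) with ha
      set b := Real.sqrt (f ⬝ᵥ (M⁻¹ *ᵥ f)) with hb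
      have ha2 : a * a = x ⬝ᵥ (M *ᵥ x) := Real.mul_self_sqrt hMx.le
      have hapos : 0 < a := Real.sqrt_pos.mpr hMx
      have key : (t + lam) * (a * a) ≤ a * b := by
        rw [ha2]
        calc (t + lam) * (x ⬝ᵥ (M *ᵥ x))
            = lam * (x ⬝ᵥ (M *ᵥ x)) + t * (x ⬝ᵥ (M *ᵥ x)) := by ring
          _ ≤ x ⬝ᵥ (A *ᵥ x) + t * (x ⬝ᵥ (M *ᵥ x)) := by linarith
          _ = x ⬝ᵥ f := hdot.symm
          _ ≤ a * b := hcs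
      rw [le_div_iff₀ htl]
      nlinarith [key, hapos]
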